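/- arXiv:2401.17937 — 3 statements merged into one kernel-verified Lean document; each statement's English description precedes it below -/
import Mathlib

section
/- Suppose labels ℓ_a and ℓ_b start at the same node s, end at the same node v(ℓ_a) = v(ℓ_b), and satisfy c̄(ℓ_a) ≤ c̄(ℓ_b), t(ℓ_a) ≤ t(ℓ_b), and N(ℓ_a) ⊆ N(ℓ_b). Then every length-feasible cycle obtainable by successive extensions of ℓ_b is also obtainable by successive extensions of ℓ_a (using the same extension sequence), the cycle obtained from ℓ_a is length-feasible, and its reduced cost is at most that of the cycle obtained from ℓ_b. Hence ℓ_a dominates ℓ_b. -/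
/-- A label `(N, v, c̄, t, q)` representing a partial cycle (path) from a fixed start node. -/
structure Label (V : Type) where
  N : Finset V
  v : V
  c : ℝ
  t : ℝ
  q : ℝ

variable {V : Type} [DecidableEq V]

/-- Extension of a label by node `j` along the edge `{v, j}`. -/
def extendLabel (te : V → V → ℝ) (qn π : V → ℝ) (ℓ : Label V) (j : V) : Label V :=
  ⟨insert j ℓ.N, j, ℓ.c - π j, ℓ.t + te ℓ.v j, min ℓ.q (qn j)⟩

/-- Successive extensions of a label by a sequence (list) of nodes. -/
def extendList (te : V → V → ℝ) (qn π : V → ℝ) : Label V → List V → Label V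
  | ℓ, [] => ℓ
  | ℓ, j :: js => extendList te qn π (extendLabel te qn π ℓ j) js

/-- A sequence of extensions is valid if each node is unvisited when it is added. -/
def ValidSeq (te : V → V → ℝ) (qn π : V → ℝ) : Label V → List V → Prop
  | _, [] => True
  | ℓ, j :: js => j ∉ ℓ.N ∧ ValidSeq te qn π (extendLabel te qn π ℓ j) js

lemma dominance_aux (te : V → V → ℝ) (qn π : V → ℝ) :
    ∀ (L : List V) (ℓa ℓb : Label V), ℓa.v = ℓb.v → ℓa.c ≤ ℓb.c → ℓa.t ≤ ℓb.t →
      ℓa.N ⊆ ℓb.N → ℓb.q ≤ ℓa.q → ValidSeq te qn π ℓb L →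
      ValidSeq te qn π ℓa L ∧
      (extendList te qn π ℓa L).v = (extendList te qn π ℓb L).v ∧
      (extendList te qn π ℓa L).c ≤ (extendList te qn π ℓb L).c ∧
      (extendList te qn π ℓa L).t ≤ (extendList te qn π ℓb L).t ∧
      (extendList te qn π ℓb L).q ≤ (extendList te qn π ℓa L).q := by
  intro L
  induction L with
  | nil => intro ℓa ℓb hv hc ht hN hq _; exact ⟨trivial, hv, hc, ht, hq⟩
  | cons j js ih =>
    intro ℓa ℓb hv hc ht hN hq hval
    obtain ⟨hj, hval'⟩ := hval
    have hrec := ih (extendLabel te qn π ℓa j) (extendLabel te qn π ℓb j) rfl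
      (by simpa [extendLabel] using hc)
      (by simp only [extendLabel, hv]; linarith)
      (by simp [extendLabel]; exact Finset.insert_subset_insert _ hN)
      (by simp only [extendLabel]; exact min_le_min hq le_rfl) hval'
    exact ⟨⟨fun h => hj (hN h), hrec.1⟩, hrec.2⟩

/-- dominance: if `ℓ_a`, `ℓ_b` start at `s`, end at the same node, and
satisfy `c̄(ℓ_a) ≤ c̄(ℓ_b)`, `t(ℓ_a) ≤ t(ℓ_b)`, `N(ℓ_a) ⊆ N(ℓ_b)`, then every
length-feasible cycle obtainable by successive extensions of `ℓ_b` is also obtainable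
by the same extension sequence from `ℓ_a`, the resulting cycle is length-feasible,
and its reduced cost is at most that of the cycle obtained from `ℓ_b`. -/
theorem dominance
    (te : V → V → ℝ) (qn π : V → ℝ)
    (hte : ∀ i j, 0 ≤ te i j) (hqn : ∀ i, 0 < qn i) (s : V)
    (ℓa ℓb : Label V)
    (hqa : ℓa.q = (insert s ℓa.N).inf' (Finset.insert_nonempty _ _) qn)
    (hqb : ℓb.q = (insert s ℓb.N).inf' (Finset.insert_nonempty _ _) qn)
    (hv : ℓa.v = ℓb.v)
    (hc : ℓa.c ≤ ℓb.c)
    (ht : ℓa.t ≤ ℓb.t)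
    (hN : ℓa.N ⊆ ℓb.N) :
    ∀ L : List V, ValidSeq te qn π ℓb L →
      (extendList te qn π ℓb L).v = s →
      (extendList te qn π ℓb L).t ≤ (extendList te qn π ℓb L).q →
      ValidSeq te qn π ℓa L ∧
      (extendList te qn π ℓa L).v = s ∧
      (extendList te qn π ℓa L).t ≤ (extendList te qn π ℓa L).q ∧
      (extendList te qn π ℓa L).c ≤ (extendList te qn π ℓb L).c := by
  
  have hq : ℓb.q ≤ ℓa.q := by
    rw [hqa, hqb]
    exact Finset.inf'_mono qn (Finset.insert_subset_insert _ hN) _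
  intro L hval hvs htq
  obtain ⟨h1, h2, h3, h4, h5⟩ := dominance_aux te qn π L ℓa ℓb hv hc ht hN hq hval
  exact ⟨h1, h2.trans hvs, le_trans h4 (le_trans htq h5), h3⟩
end

section
/- Bidirectional search is complete: for any length-feasible cycle C of minimum reduced cost found by monodirectional forward search with dominance pruning, there exist labels ℓ_a and ℓ_b, each explored by bidirectional search (i.e., each either satisfying t < q/2 when extended or being the first label of the monotone sequence with t ≥ q/2), starting at s, ending at the same node, disjoint except at their common end node, such that the merged label ℓ_a‖ℓ_b is length-feasible and has reduced cost equal to that of C. -/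
variable {V : Type} [DecidableEq V]

/-- The initial label at start node `s`. -/
def initLabel (qn : V → ℝ) (s : V) : Label V := ⟨∅, s, 1, 0, qn s⟩

/-- Labels explored by bidirectional search from `s`: the initial label, and any label
obtained by extending an explored label that is still within the halfway point. -/
inductive ReachHalf (te : V → V → ℝ) (qn π : V → ℝ) (s : V) : Label V → Prop
  | init : ReachHalf te qn π s (initLabel qn s)
  | extend (ℓ : Label V) (j : V) : ReachHalf te qn π s ℓ → ℓ.t ≤ ℓ.q / 2 →
      j ∉ ℓ.N → ReachHalf te qn π s (extendLabel te qn π ℓ j)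

/-- Dominance: same end node, smaller-or-equal reduced cost and travel time,
subset node set (and hence larger-or-equal minimum critical time). -/
def Dominates (ℓa ℓb : Label V) : Prop :=
  ℓa.v = ℓb.v ∧ ℓa.c ≤ ℓb.c ∧ ℓa.t ≤ ℓb.t ∧ ℓa.N ⊆ ℓb.N ∧ ℓb.q ≤ ℓa.q

/-- Two labels from `s` can be merged: they end at the same node and their paths are
disjoint except at the common start and end node (the trivial initial label may be
merged with a label ending back at `s`). -/
def Mergeable (s : V) (ℓa ℓb : Label V) : Prop :=
  ℓa.v = ℓb.v ∧
    ((ℓa.N ∩ ℓb.N = {ℓa.v} ∧ s ∉ ℓa.N ∧ s ∉ ℓb.N) ∨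
      (ℓa.N = ∅ ∧ ℓa.v = s) ∨ (ℓb.N = ∅ ∧ ℓa.v = s))

/-- The merged label `ℓ_a‖ℓ_b`. -/
def mergeLabel (π : V → ℝ) (s : V) (ℓa ℓb : Label V) : Label V :=
  ⟨ℓa.N ∪ ℓb.N ∪ {s}, s, ℓa.c + ℓb.c - π s + π ℓa.v - 1,
    ℓa.t + ℓb.t, min ℓa.q ℓb.q⟩


section Helpers
set_option linter.unusedSectionVars false

variable {V : Type} [DecidableEq V]
variable (te : V → V → ℝ) (qn π : V → ℝ)

/-- Total travel time of a path starting at `v` through the node list. -/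
def pathTime (te : V → V → ℝ) : V → List V → ℝ
  | _, [] => 0
  | v, j :: js => te v j + pathTime te j js

lemma pathTime_nonneg (hte : ∀ i j, 0 ≤ te i j) (v : V) (L : List V) :
    0 ≤ pathTime te v L := by
  induction L generalizing v with
  | nil => simp [pathTime]
  | cons j js ih => simpa [pathTime] using add_nonneg (hte v j) (ih j)

lemma pathTime_append (v : V) (a b : List V) :
    pathTime te v (a ++ b) = pathTime te v a + pathTime te (a.getLastD v) b := by
  induction a generalizing v with
  | nil => simp [pathTime]
  | cons j js ih =>
      simp only [List.cons_append, pathTime, List.append_eq, ih j, List.getLastD_cons]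
      ring

lemma pathTime_reverse (hsym : ∀ i j, te i j = te j i) (M : List V) (a b : V) :
    pathTime te a (M ++ [b]) = pathTime te b (M.reverse ++ [a]) := by
  induction M generalizing a with
  | nil => simp [pathTime, hsym a b]
  | cons x M ih =>
      have h1 : pathTime te a ((x :: M) ++ [b]) = te a x + pathTime te x (M ++ [b]) := by
        simp [pathTime]
      have h2 : ((x :: M).reverse ++ [a]) = (M.reverse ++ [x]) ++ [a] := by simp
      have h3 : (M.reverse ++ [x]).getLastD b = x := List.getLastD_concat
      have h4 : pathTime te b ((M.reverse ++ [x]) ++ [a])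
          = pathTime te b (M.reverse ++ [x]) + pathTime te x [a] := by
        rw [pathTime_append, h3]
      have h5 : pathTime te x [a] = te x a := by simp [pathTime]
      rw [h1, ih x, h2, h4, h5, hsym x a]
      ring

lemma extendList_append (ℓ : Label V) (a b : List V) :
    extendList te qn π ℓ (a ++ b) = extendList te qn π (extendList te qn π ℓ a) b := by
  induction a generalizing ℓ with
  | nil => simp [extendList]
  | cons j js ih => simp [extendList, ih]

lemma extendList_c (ℓ : Label V) (L : List V) :
    (extendList te qn π ℓ L).c = ℓ.c - (L.map π).sum := by
  induction L generalizing ℓ with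
  | nil => simp [extendList]
  | cons j js ih => simp [extendList, extendLabel, ih]; ring

lemma extendList_t (ℓ : Label V) (L : List V) :
    (extendList te qn π ℓ L).t = ℓ.t + pathTime te ℓ.v L := by
  induction L generalizing ℓ with
  | nil => simp [extendList, pathTime]
  | cons j js ih => simp [extendList, extendLabel, ih, pathTime]; ring

lemma extendList_v (ℓ : Label V) (L : List V) :
    (extendList te qn π ℓ L).v = L.getLastD ℓ.v := by
  induction L generalizing ℓ with
  | nil => simp [extendList]
  | cons j js ih =>
      rw [List.getLastD_cons]
      exact ih (extendLabel te qn π ℓ j)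

lemma extendList_N (ℓ : Label V) (L : List V) :
    (extendList te qn π ℓ L).N = ℓ.N ∪ L.toFinset := by
  induction L generalizing ℓ with
  | nil => simp [extendList]
  | cons j js ih =>
      simp only [extendList, extendLabel, ih]
      ext y
      simp only [Finset.mem_union, Finset.mem_insert, List.mem_toFinset, List.mem_cons,
        List.toFinset_cons]
      tauto

lemma extendList_q_le (ℓ : Label V) (L : List V) :
    (extendList te qn π ℓ L).q ≤ ℓ.q := by
  induction L generalizing ℓ with
  | nil => simp [extendList]
  | cons j js ih =>
      refine le_trans (ih _) ?_
      simp [extendLabel]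

lemma extendList_q_le_of_mem (ℓ : Label V) (L : List V) {j : V} (hj : j ∈ L) :
    (extendList te qn π ℓ L).q ≤ qn j := by
  induction L generalizing ℓ with
  | nil => simp at hj
  | cons x xs ih =>
      rcases List.mem_cons.mp hj with h | h
      · subst h
        refine le_trans (extendList_q_le te qn π _ xs) ?_
        simp [extendList, extendLabel]
      · exact ih _ h

lemma lt_extendList_q (ℓ : Label V) (L : List V) {x : ℝ}
    (h1 : x < ℓ.q) (h2 : ∀ j ∈ L, x < qn j) :
    x < (extendList te qn π ℓ L).q := by
  induction L generalizing ℓ with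
  | nil => simpa [extendList]
  | cons j js ih =>
      refine ih _ ?_ (fun y hy => h2 y (List.mem_cons_of_mem _ hy))
      simp only [extendLabel, lt_min_iff]
      exact ⟨h1, h2 j (List.mem_cons_self)⟩

lemma le_extendList_q (ℓ : Label V) (L : List V) {x : ℝ}
    (h1 : x ≤ ℓ.q) (h2 : ∀ j ∈ L, x ≤ qn j) :
    x ≤ (extendList te qn π ℓ L).q := by
  induction L generalizing ℓ with
  | nil => simpa [extendList]
  | cons j js ih =>
      refine ih _ ?_ (fun y hy => h2 y (List.mem_cons_of_mem _ hy))
      simp only [extendLabel, le_min_iff]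
      exact ⟨h1, h2 j (List.mem_cons_self)⟩

lemma extendList_t_mono (hte : ∀ i j, 0 ≤ te i j) (ℓ : Label V) (L : List V) :
    ℓ.t ≤ (extendList te qn π ℓ L).t := by
  rw [extendList_t]
  have := pathTime_nonneg te hte ℓ.v L
  linarith

lemma validSeq_iff (ℓ : Label V) (L : List V) :
    ValidSeq te qn π ℓ L ↔ L.Nodup ∧ ∀ j ∈ L, j ∉ ℓ.N := by
  induction L generalizing ℓ with
  | nil => simp [ValidSeq]
  | cons j js ih =>
      simp only [ValidSeq, ih, extendLabel, List.nodup_cons, Finset.mem_insert]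
      constructor
      · rintro ⟨h1, h2, h3⟩
        refine ⟨⟨fun hj => (h3 j hj (Or.inl rfl)), h2⟩, ?_⟩
        rintro y hy
        rcases List.mem_cons.mp hy with h | h
        · subst h; exact h1
        · intro hN; exact h3 y h (Or.inr hN)
      · rintro ⟨⟨hj, h2⟩, h3⟩
        refine ⟨h3 j (List.mem_cons_self), h2, ?_⟩
        intro y hy hc
        rcases hc with h | h
        · subst h; exact hj hy
        · exact h3 y (List.mem_cons_of_mem _ hy) h

lemma reachHalf_extendList (s : V) (ℓ : Label V) (h : ReachHalf te qn π s ℓ)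
    (L : List V) (hv : ValidSeq te qn π ℓ L)
    (hh : ∀ i < L.length, (extendList te qn π ℓ (L.take i)).t ≤
      (extendList te qn π ℓ (L.take i)).q / 2) :
    ReachHalf te qn π s (extendList te qn π ℓ L) := by
  induction L generalizing ℓ with
  | nil => exact h
  | cons j js ih =>
      obtain ⟨hj, hv'⟩ := hv
      have h0 : ℓ.t ≤ ℓ.q / 2 := by simpa [extendList] using hh 0 (Nat.succ_pos _)
      refine ih (extendLabel te qn π ℓ j) (ReachHalf.extend ℓ j h h0 hj) hv' ?_
      intro i hi
      simpa [extendList] using hh (i + 1) (by simpa using Nat.succ_lt_succ hi)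

lemma reachHalf_structure (s : V) (ℓ : Label V) (h : ReachHalf te qn π s ℓ) :
    ℓ.v ∈ ℓ.N ∨ (ℓ.N = ∅ ∧ ℓ.v = s) := by
  induction h with
  | init => right; simp [initLabel]
  | extend ℓ j _ _ _ _ => left; simp [extendLabel]


lemma merge_transfer (s : V) (ℓa ℓb ℓa' ℓb' : Label V)
    (hm : Mergeable s ℓa ℓb)
    (da : Dominates ℓa' ℓa) (db : Dominates ℓb' ℓb)
    (sa : ℓa'.v ∈ ℓa'.N ∨ (ℓa'.N = ∅ ∧ ℓa'.v = s))
    (sb : ℓb'.v ∈ ℓb'.N ∨ (ℓb'.N = ∅ ∧ ℓb'.v = s)) :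
    Mergeable s ℓa' ℓb' ∧
    (mergeLabel π s ℓa' ℓb').t ≤ (mergeLabel π s ℓa ℓb).t ∧
    (mergeLabel π s ℓa ℓb).q ≤ (mergeLabel π s ℓa' ℓb').q ∧
    (mergeLabel π s ℓa' ℓb').c ≤ (mergeLabel π s ℓa ℓb).c := by
  obtain ⟨hva, hca, hta, hNa, hqa⟩ := da
  obtain ⟨hvb, hcb, htb, hNb, hqb⟩ := db
  obtain ⟨hv, hcase⟩ := hm
  have vv : ℓa'.v = ℓb'.v := by rw [hva, hv, ← hvb]
  refine ⟨⟨vv, ?_⟩, ?_, ?_, ?_⟩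
  · rcases hcase with ⟨hint, hsa2, hsb2⟩ | ⟨hN, hvs⟩ | ⟨hN, hvs⟩
    · rcases sa with ha | ⟨hae, havs⟩
      · rcases sb with hb | ⟨hbe, hbvs⟩
        · left
          refine ⟨?_, fun hc => hsa2 (hNa hc), fun hc => hsb2 (hNb hc)⟩
          ext y
          simp only [Finset.mem_inter, Finset.mem_singleton]
          constructor
          · rintro ⟨hy1, hy2⟩
            have hy : y ∈ ℓa.N ∩ ℓb.N := Finset.mem_inter.mpr ⟨hNa hy1, hNb hy2⟩
            rw [hint, Finset.mem_singleton] at hy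
            rw [hy, hva]
          · rintro rfl
            exact ⟨ha, vv ▸ hb⟩
        · exact Or.inr (Or.inr ⟨hbe, vv.trans hbvs⟩)
      · exact Or.inr (Or.inl ⟨hae, havs⟩)
    · exact Or.inr (Or.inl ⟨Finset.subset_empty.mp (hN ▸ hNa), hva.trans hvs⟩)
    · exact Or.inr (Or.inr ⟨Finset.subset_empty.mp (hN ▸ hNb), hva.trans hvs⟩)
  · exact add_le_add hta htb
  · exact min_le_min hqa hqb
  · simp only [mergeLabel, hva]
    linarith

end Helpers

/-- completeness of bidirectional search: let `C` (given by the extension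
sequence `L` from `s`) be a length-feasible cycle of minimum reduced cost. Suppose the
retained label set `B` of bidirectional search consists of explored labels and contains,
for every label explored by bidirectional search, a label dominating it. Then there are
labels `ℓ_a, ℓ_b ∈ B`, ending at the same node and disjoint except at their common end
node, whose merge `ℓ_a‖ℓ_b` is length-feasible and has reduced cost equal to that of `C`. -/
theorem bidirectional_search_complete
    (te : V → V → ℝ) (qn π : V → ℝ) (s : V)
    (hsym : ∀ i j, te i j = te j i)
    (hte : ∀ i j, 0 ≤ te i j) (hqn : ∀ i, 0 < qn i)
    (L : List V) (hlen : 2 ≤ L.length)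
    (hvalid : ValidSeq te qn π (initLabel qn s) L)
    (hclose : (extendList te qn π (initLabel qn s) L).v = s)
    (hfeas : (extendList te qn π (initLabel qn s) L).t ≤
             (extendList te qn π (initLabel qn s) L).q)
    (B : Set (Label V))
    (hB : ∀ ℓ ∈ B, ReachHalf te qn π s ℓ)
    (hBdom : ∀ ℓ, ReachHalf te qn π s ℓ → ∃ ℓ' ∈ B, Dominates ℓ' ℓ)
    (hmin : ∀ ℓa ∈ B, ∀ ℓb ∈ B, Mergeable s ℓa ℓb →
      (mergeLabel π s ℓa ℓb).t ≤ (mergeLabel π s ℓa ℓb).q →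
      (extendList te qn π (initLabel qn s) L).c ≤ (mergeLabel π s ℓa ℓb).c) :
    ∃ ℓa ∈ B, ∃ ℓb ∈ B, Mergeable s ℓa ℓb ∧
      (mergeLabel π s ℓa ℓb).t ≤ (mergeLabel π s ℓa ℓb).q ∧
      (mergeLabel π s ℓa ℓb).c = (extendList te qn π (initLabel qn s) L).c := by
  classical
  set I := initLabel qn s with hI
  have hLne : L ≠ [] := by intro h; rw [h] at hlen; simp at hlen
  obtain ⟨hnodup, -⟩ := (validSeq_iff te qn π I L).mp hvalid
  -- decompose L = M ++ [s]
  have hlast : L.getLastD s = s := by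
    have := extendList_v te qn π I L
    rw [hclose] at this
    exact this.symm
  obtain ⟨M, hM⟩ : ∃ M, L = M ++ [s] := by
    refine ⟨L.dropLast, ?_⟩
    have h1 : L.getLast hLne = s := by
      rw [← hlast, List.getLastD_eq_getLast?, List.getLast?_eq_getLast hLne]
      rfl
    conv_lhs => rw [← List.dropLast_append_getLast hLne]
    rw [h1]
  have hMnd : M.Nodup ∧ s ∉ M := by
    rw [hM] at hnodup
    rw [List.nodup_append] at hnodup
    exact ⟨hnodup.1, fun hs => hnodup.2.2 s hs s (by simp) rfl⟩
  obtain ⟨hMnodup, hsM⟩ := hMnd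
  set n := M.length with hn
  have hLlen : L.length = n + 1 := by rw [hM]; simp [hn]
  have hn1 : 1 ≤ n := by omega
  -- key quantities
  set Q := (extendList te qn π I L).q with hQ
  have hQpos : 0 < Q := by
    refine lt_extendList_q te qn π I L ?_ (fun j _ => hqn j)
    exact hqn s
  have hQof : ∀ (X : List V), (∀ j ∈ X, j ∈ L) → Q ≤ (extendList te qn π I X).q := by
    intro X hX
    exact le_extendList_q te qn π I X (extendList_q_le te qn π I L)
      (fun j hj => extendList_q_le_of_mem te qn π I L (hX j hj))
  set T : ℕ → ℝ := fun i => (extendList te qn π I (L.take i)).t with hT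
  have hmonoX : ∀ (X : List V) (i : ℕ),
      (extendList te qn π I (X.take i)).t ≤ (extendList te qn π I X).t := by
    intro X i
    conv_rhs => rw [← List.take_append_drop i X]
    rw [extendList_append]
    exact extendList_t_mono te qn π hte _ _
  have hTmono : ∀ i j, i ≤ j → T i ≤ T j := by
    intro i j hij
    have := hmonoX (L.take j) i
    rwa [List.take_take, min_eq_left hij] at this
  set P : ℕ → Prop := fun i => T i ≤ Q / 2 with hP
  have hP0 : P 0 := by
    have : T 0 = 0 := by simp [hT, extendList, hI, initLabel]
    rw [hP]; simp only [this]; linarith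
  set kg := Nat.findGreatest P n with hkg
  have hPkg : T kg ≤ Q / 2 := Nat.findGreatest_spec (Nat.zero_le n) hP0
  have hkgn : kg ≤ n := Nat.findGreatest_le n
  -- the general condition for ReachHalf
  have key : ∀ (X : List V), (∀ j ∈ X, j ∈ L) →
      (∀ i, i < X.length → (extendList te qn π I (X.take i)).t ≤ Q / 2) →
      ∀ i, i < X.length → (extendList te qn π I (X.take i)).t ≤
        (extendList te qn π I (X.take i)).q / 2 := by
    intro X hX hh i hi
    have h1 := hh i hi
    have h2 : Q ≤ (extendList te qn π I (X.take i)).q :=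
      hQof _ (fun j hj => hX j (List.mem_of_mem_take hj))
    linarith
  -- reduce to existence of ReachHalf labels
  suffices h : ∃ ℓa ℓb, ReachHalf te qn π s ℓa ∧ ReachHalf te qn π s ℓb ∧
      Mergeable s ℓa ℓb ∧ (mergeLabel π s ℓa ℓb).t ≤ (mergeLabel π s ℓa ℓb).q ∧
      (mergeLabel π s ℓa ℓb).c = (extendList te qn π I L).c by
    obtain ⟨ℓa, ℓb, ra, rb, hm, hq, hc⟩ := h
    obtain ⟨ℓa', haB, da⟩ := hBdom ℓa ra
    obtain ⟨ℓb', hbB, db⟩ := hBdom ℓb rb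
    obtain ⟨hm', ht', hq', hc'⟩ := merge_transfer π s ℓa ℓb ℓa' ℓb' hm da db
      (reachHalf_structure te qn π s _ (hB _ haB))
      (reachHalf_structure te qn π s _ (hB _ hbB))
    have hfeas' : (mergeLabel π s ℓa' ℓb').t ≤ (mergeLabel π s ℓa' ℓb').q :=
      le_trans ht' (le_trans hq hq')
    refine ⟨ℓa', haB, ℓb', hbB, hm', hfeas', ?_⟩
    rw [hc] at hc'
    exact le_antisymm hc' (hmin _ haB _ hbB hm' hfeas')
  by_cases hcase : kg = n
  · -- split at the very end: ℓa is the whole cycle, ℓb trivial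
    refine ⟨extendList te qn π I L, I, ?_, ReachHalf.init, ?_, ?_, ?_⟩
    · refine reachHalf_extendList te qn π s I ReachHalf.init L hvalid
        (key L (fun j hj => hj) ?_)
      intro i hi
      have : T i ≤ T kg := hTmono i kg (by omega)
      calc (extendList te qn π I (L.take i)).t = T i := rfl
        _ ≤ T kg := this
        _ ≤ Q / 2 := hPkg
    · exact ⟨by rw [hclose]; rfl, Or.inr (Or.inr ⟨rfl, hclose⟩)⟩
    · have h1 : (extendList te qn π I L).t ≤ Q := hfeas
      have h2 : Q ≤ I.q := extendList_q_le te qn π I L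
      have hIt : I.t = 0 := rfl
      simp only [mergeLabel, hIt, add_zero, le_min_iff]
      exact ⟨h1, le_trans h1 h2⟩
    · have hIc : I.c = 1 := rfl
      simp only [mergeLabel, hIc, hclose]
      ring
  · -- split in the middle
    have hkgn' : kg < n := lt_of_le_of_ne hkgn hcase
    set A1 := M.take kg with hA1
    have hkgM : kg < M.length := by omega
    set x := M[kg] with hx
    set E := M.drop (kg + 1) with hE
    have hsplit : M = A1 ++ x :: E := by
      rw [hA1, hx, hE, ← List.drop_eq_getElem_cons hkgM, List.take_append_drop]
    have hA1len : A1.length = kg := by rw [hA1]; simp; omega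
    clear_value A1 x E
    have hLsplit : L = (A1 ++ [x]) ++ (E ++ [s]) := by rw [hM, hsplit]; simp
    have hmemL : ∀ j, (j ∈ A1 ++ [x] ∨ j ∈ E.reverse ++ [x]) → j ∈ L := by
      intro j hj
      rw [hLsplit]
      rcases hj with hj | hj
      · exact List.mem_append_left _ hj
      · simp only [List.mem_append, List.mem_reverse, List.mem_singleton] at hj ⊢
        tauto
    have hsnM : ∀ j, (j ∈ A1 ++ [x] ∨ j ∈ E.reverse ++ [x]) → j ∈ M := by
      intro j hj
      rw [hsplit]
      simp only [List.mem_append, List.mem_reverse, List.mem_singleton, List.mem_cons] at hj ⊢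
      tauto
    have htakek : L.take (kg + 1) = A1 ++ [x] := by
      rw [hLsplit, show kg + 1 = (A1 ++ [x]).length from by simp [hA1len], List.take_left]
    -- nodup facts
    have hndax : (A1 ++ [x]).Nodup := by
      refine List.Nodup.sublist ?_ hMnodup
      rw [hsplit]
      exact List.Sublist.append_left (List.cons_sublist_cons.mpr (List.nil_sublist E)) A1
    have hndxE : (x :: E).Nodup := by
      refine List.Nodup.sublist ?_ hMnodup
      rw [hsplit]
      exact List.sublist_append_right A1 (x :: E)
    have hperm : (E.reverse ++ [x]).Perm (x :: E) :=
      (List.perm_append_singleton x E.reverse).trans ((List.reverse_perm E).cons x)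
    have hndrx : (E.reverse ++ [x]).Nodup := hperm.nodup_iff.mpr hndxE
    have hdisj : ∀ a ∈ A1, a ∉ x :: E := by
      have := hMnodup
      rw [hsplit, List.nodup_append] at this
      exact fun a ha hc => this.2.2 a ha a hc rfl
    -- the two labels
    refine ⟨extendList te qn π I (A1 ++ [x]), extendList te qn π I (E.reverse ++ [x]),
      ?_, ?_, ?_, ?_, ?_⟩
    · -- ReachHalf ℓa
      refine reachHalf_extendList te qn π s I ReachHalf.init _
        ((validSeq_iff te qn π I _).mpr ⟨hndax, by simp [hI, initLabel]⟩)
        (key _ (fun j hj => hmemL j (Or.inl hj)) ?_)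
      intro i hi
      have hlen' : (A1 ++ [x]).length = kg + 1 := by simp [hA1len]
      have htk : (A1 ++ [x]).take i = L.take i := by
        rw [← htakek, List.take_take, min_eq_left (by omega)]
      rw [htk]
      calc T i ≤ T kg := hTmono i kg (by rw [hlen'] at hi; omega)
        _ ≤ Q / 2 := hPkg
    · -- ReachHalf ℓb
      refine reachHalf_extendList te qn π s I ReachHalf.init _
        ((validSeq_iff te qn π I _).mpr ⟨hndrx, by simp [hI, initLabel]⟩)
        (key _ (fun j hj => hmemL j (Or.inr hj)) ?_)
      intro i hi
      have hile : i ≤ E.reverse.length := by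
        simp only [List.length_append, List.length_reverse, List.length_singleton] at hi
        simp only [List.length_reverse]
        omega
      have htk : (E.reverse ++ [x]).take i = E.reverse.take i :=
        List.take_append_of_le_length hile
      rw [htk]
      have h1 : (extendList te qn π I (E.reverse.take i)).t ≤
          (extendList te qn π I E.reverse).t := hmonoX E.reverse i
      refine le_trans h1 ?_
      -- show t of the reversed tail is ≤ Q/2
      have hTm : (extendList te qn π I L).t ≤ Q := hfeas
      have hnotP : ¬ P (kg + 1) := Nat.findGreatest_is_greatest (Nat.lt_succ_self kg) (by omega)
      have hTk1 : Q / 2 < T (kg + 1) := by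
        simp only [hP, not_le] at hnotP
        exact hnotP
      cases E with
      | nil =>
          have : (extendList te qn π I ([] : List V).reverse).t = 0 := by
            simp [extendList, hI, initLabel]
          rw [this]; linarith
      | cons e E' =>
          have hrev : ((e :: E').reverse : List V) = E'.reverse ++ [e] := by simp
          have hpt1 : (extendList te qn π I ((e :: E').reverse)).t
              = pathTime te e (E' ++ [s]) := by
            rw [hrev, extendList_t]
            have : pathTime te s (E'.reverse ++ [e]) = pathTime te e (E'.reverse.reverse ++ [s]) :=
              pathTime_reverse te hsym E'.reverse s e
            rw [List.reverse_reverse] at this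
            have hIt : I.t = 0 := rfl
            have hIv : I.v = s := rfl
            rw [hIt, hIv, this]
            ring
          have hL2 : L = (A1 ++ [x, e]) ++ (E' ++ [s]) := by
            rw [hLsplit]; simp
          have htake2 : L.take (kg + 2) = A1 ++ [x, e] := by
            rw [hL2, show kg + 2 = (A1 ++ [x, e]).length from by simp [hA1len], List.take_left]
          have hTm_split : (extendList te qn π I L).t
              = T (kg + 2) + pathTime te e (E' ++ [s]) := by
            rw [hT]
            simp only
            rw [htake2, extendList_t, extendList_t, hL2, pathTime_append]
            have : (A1 ++ [x, e]).getLastD I.v = e := by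
              rw [show A1 ++ [x, e] = (A1 ++ [x]) ++ [e] from by simp]
              exact List.getLastD_concat
            rw [this]
            ring
          have hT12 : T (kg + 1) ≤ T (kg + 2) := hTmono _ _ (by omega)
          rw [hpt1]
          have := hTm_split
          linarith [hTm, hTk1, hT12, hTm_split ▸ hTm]
    · -- Mergeable
      have hva : (extendList te qn π I (A1 ++ [x])).v = x := by
        rw [extendList_v]
        exact List.getLastD_concat
      have hvb : (extendList te qn π I (E.reverse ++ [x])).v = x := by
        rw [extendList_v]
        exact List.getLastD_concat
      have hNa : (extendList te qn π I (A1 ++ [x])).N = (A1 ++ [x]).toFinset := by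
        rw [extendList_N]; simp [hI, initLabel]
      have hNb : (extendList te qn π I (E.reverse ++ [x])).N = (E.reverse ++ [x]).toFinset := by
        rw [extendList_N]; simp [hI, initLabel]
      refine ⟨hva.trans hvb.symm, Or.inl ⟨?_, ?_, ?_⟩⟩
      · rw [hva, hNa, hNb]
        ext y
        have hxA1 : x ∉ A1 := fun hc => hdisj x hc (List.mem_cons_self)
        have hxE : x ∉ E := (List.nodup_cons.mp hndxE).1
        have hAE : ∀ a ∈ A1, a ∉ E := fun a ha hc => hdisj a ha (List.mem_cons_of_mem _ hc)
        simp only [Finset.mem_inter, List.mem_toFinset, List.mem_append, List.mem_singleton,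
          List.mem_reverse, Finset.mem_singleton]
        constructor
        · rintro ⟨h1 | h1, h2 | h2⟩
          · exact absurd h2 (hAE y h1)
          · exact h2
          · exact h1
          · exact h1
        · rintro rfl
          exact ⟨Or.inr rfl, Or.inr rfl⟩
      · rw [hNa]
        simp only [List.mem_toFinset]
        intro hc
        exact hsM (hsnM s (Or.inl hc))
      · rw [hNb]
        simp only [List.mem_toFinset]
        intro hc
        exact hsM (hsnM s (Or.inr hc))
    · -- length feasibility of the merge
      have hta : (extendList te qn π I (A1 ++ [x])).t = pathTime te s (A1 ++ [x]) := by
        rw [extendList_t]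
        have hIt : I.t = 0 := rfl
        have hIv : I.v = s := rfl
        rw [hIt, hIv]; ring
      have htb : (extendList te qn π I (E.reverse ++ [x])).t = pathTime te x (E ++ [s]) := by
        rw [extendList_t]
        have : pathTime te s (E.reverse ++ [x]) = pathTime te x (E.reverse.reverse ++ [s]) :=
          pathTime_reverse te hsym E.reverse s x
        rw [List.reverse_reverse] at this
        have hIt : I.t = 0 := rfl
        have hIv : I.v = s := rfl
        rw [hIt, hIv, this]; ring
      have hTtot : (extendList te qn π I L).t
          = pathTime te s (A1 ++ [x]) + pathTime te x (E ++ [s]) := by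
        rw [extendList_t, hLsplit, pathTime_append]
        have : (A1 ++ [x]).getLastD I.v = x := List.getLastD_concat
        rw [this]
        have hIt : I.t = 0 := rfl
        have hIv : I.v = s := rfl
        rw [hIt, hIv]; ring
      have hqa : Q ≤ (extendList te qn π I (A1 ++ [x])).q :=
        hQof _ (fun j hj => hmemL j (Or.inl hj))
      have hqb : Q ≤ (extendList te qn π I (E.reverse ++ [x])).q :=
        hQof _ (fun j hj => hmemL j (Or.inr hj))
      simp only [mergeLabel, le_min_iff]
      rw [hta, htb]
      have hfe : pathTime te s (A1 ++ [x]) + pathTime te x (E ++ [s]) ≤ Q := by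
        rw [← hTtot]; exact hfeas
      exact ⟨le_trans hfe hqa, le_trans hfe hqb⟩
    · -- reduced cost of the merge
      have hca : (extendList te qn π I (A1 ++ [x])).c = 1 - ((A1 ++ [x]).map π).sum := by
        rw [extendList_c]; rfl
      have hcb : (extendList te qn π I (E.reverse ++ [x])).c
          = 1 - ((E.reverse ++ [x]).map π).sum := by
        rw [extendList_c]; rfl
      have hcL : (extendList te qn π I L).c = 1 - (L.map π).sum := by
        rw [extendList_c]; rfl
      have hva : (extendList te qn π I (A1 ++ [x])).v = x := by
        rw [extendList_v]
        exact List.getLastD_concat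
      have hsum : (L.map π).sum = (A1.map π).sum + π x + (E.map π).sum + π s := by
        rw [hLsplit]
        simp [List.sum_append]
        ring
      have hsumr : ((E.reverse ++ [x]).map π).sum = (E.map π).sum + π x := by
        simp [List.sum_append, List.map_reverse, List.sum_reverse]
      simp only [mergeLabel]
      rw [hca, hcb, hcL, hva, hsum, hsumr]
      simp [List.sum_append]
      ring
end

section
/- If travel times satisfy the triangle inequality, then any feasible solution of the set covering relaxation of LCCP (a collection of length-feasible cycles such that every node belongs to at least one cycle) can be transformed into a feasible set partitioning solution with the same number of cycles: for each node covered more than once, remove it from all but one of the cycles, and all resulting cycles remain length-feasible. -/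
variable {V : Type} [DecidableEq V] [Fintype V]

/-- Total travel time of the cycle visiting the nodes of `L` in order (cyclically). -/
def cycTime (te : V → V → ℝ) (L : List V) : ℝ :=
  (List.zipWith te L (L.rotate 1)).sum

/-- Minimum critical time over the nodes of a cycle. -/
def cycQ (qn : V → ℝ) : List V → ℝ
  | [] => 0
  | a :: l => (l.map qn).foldr min (qn a)

/-- A length-feasible cycle: a nonempty list of distinct nodes whose total travel time
is at most the minimum critical time of its nodes. -/
def LengthFeasible (te : V → V → ℝ) (qn : V → ℝ) (L : List V) : Prop :=
  L ≠ [] ∧ L.Nodup ∧ cycTime te L ≤ cycQ qn L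

/-- Cost of the path x → l... → y. -/
def pcost (te : V → V → ℝ) : V → List V → V → ℝ
  | x, [], y => te x y
  | x, a :: l, y => te x a + pcost te a l y

lemma cycTime_cons (te : V → V → ℝ) (a : V) (l : List V) :
    cycTime te (a :: l) = pcost te a l a := by
  have h : ∀ (l : List V) (a y : V),
      (List.zipWith te (a :: l) (l ++ [y])).sum = pcost te a l y := by
    intro l
    induction l with
    | nil => intro a y; simp [pcost]
    | cons b l ih => intro a y; simp [pcost, ih b y]
  have hrot : (a :: l).rotate 1 = l ++ [a] := by
    rw [show (1 : ℕ) = 0 + 1 from rfl, List.rotate_cons_succ, List.rotate_zero]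
  rw [cycTime, hrot, h]

lemma te_le_pcost (te : V → V → ℝ) (hte : ∀ i j, 0 ≤ te i j)
    (htri : ∀ i j k, te i j ≤ te i k + te k j) :
    ∀ (l : List V) (x y : V), te x y ≤ pcost te x l y := by
  intro l
  induction l with
  | nil => intro x y; simp [pcost]
  | cons a l ih =>
    intro x y
    calc te x y ≤ te x a + te a y := htri x y a
    _ ≤ te x a + pcost te a l y := by linarith [ih a y]

lemma pcost_skip_head (te : V → V → ℝ) (hte : ∀ i j, 0 ≤ te i j)
    (htri : ∀ i j k, te i j ≤ te i k + te k j) :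
    ∀ (l : List V) (x a y : V), pcost te x l y ≤ te x a + pcost te a l y := by
  intro l x a y
  cases l with
  | nil => simpa [pcost] using htri x y a
  | cons b l => simp only [pcost]; linarith [htri x b a]

lemma pcost_last (te : V → V → ℝ) (hte : ∀ i j, 0 ≤ te i j)
    (htri : ∀ i j k, te i j ≤ te i k + te k j) :
    ∀ (l : List V) (x y z : V), pcost te x l y ≤ pcost te x l z + te z y := by
  intro l
  induction l with
  | nil => intro x y z; simpa [pcost] using htri x y z
  | cons a l ih => intro x y z; simp only [pcost]; linarith [ih a y z]

lemma pcost_sublist (te : V → V → ℝ) (hte : ∀ i j, 0 ≤ te i j)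
    (htri : ∀ i j k, te i j ≤ te i k + te k j)
    {l' l : List V} (hs : l'.Sublist l) :
    ∀ x y, pcost te x l' y ≤ pcost te x l y := by
  induction hs with
  | slnil => intro x y; exact le_refl _
  | cons a h ih =>
    intro x y
    calc pcost te x _ y ≤ pcost te x _ y := ih x y
    _ ≤ te x a + pcost te a _ y := pcost_skip_head te hte htri _ x a y
    _ = pcost te x (a :: _) y := rfl
  | cons_cons a h ih =>
    intro x y
    simp only [pcost]
    linarith [ih a y]

lemma pcost_append (te : V → V → ℝ) :
    ∀ (p : List V) (x a : V) (s : List V) (y : V),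
      pcost te x (p ++ a :: s) y = pcost te x p a + pcost te a s y := by
  intro p
  induction p with
  | nil => intro x a s y; simp [pcost]
  | cons b p ih => intro x a s y; simp [pcost, ih b a s y]; ring

lemma cycTime_sublist (te : V → V → ℝ) (hte : ∀ i j, 0 ≤ te i j)
    (htri : ∀ i j k, te i j ≤ te i k + te k j)
    {L' L : List V} (hs : L'.Sublist L) (hne : L' ≠ []) :
    cycTime te L' ≤ cycTime te L := by
  obtain ⟨a', l', rfl⟩ : ∃ a' l', L' = a' :: l' := by
    cases L' with
    | nil => exact absurd rfl hne
    | cons a l => exact ⟨a, l, rfl⟩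
  rw [List.cons_sublist_iff] at hs
  obtain ⟨r₁, r₂, rfl, ha, hl⟩ := hs
  obtain ⟨p, q, rfl⟩ := List.append_of_mem ha
  have hdecomp : (p ++ a' :: q) ++ r₂ = p ++ a' :: (q ++ r₂) := by simp
  rw [hdecomp]
  have hl' : l'.Sublist (q ++ r₂) := hl.trans (List.sublist_append_right q r₂)
  cases p with
  | nil =>
    simp only [List.nil_append]
    rw [cycTime_cons, cycTime_cons]
    exact pcost_sublist te hte htri hl' a' a'
  | cons a p =>
    rw [cycTime_cons, List.cons_append, cycTime_cons, pcost_append]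
    calc pcost te a' l' a' ≤ pcost te a' (q ++ r₂) a' :=
          pcost_sublist te hte htri hl' a' a'
    _ ≤ pcost te a' (q ++ r₂) a + te a a' :=
          pcost_last te hte htri _ a' a' a
    _ ≤ pcost te a' (q ++ r₂) a + pcost te a p a' := by
          linarith [te_le_pcost te hte htri p a a']
    _ = pcost te a p a' + pcost te a' (q ++ r₂) a := by ring

lemma foldr_min_le (b : ℝ) : ∀ (l : List ℝ), l.foldr min b ≤ b := by
  intro l
  induction l with
  | nil => simp
  | cons c l ih => exact le_trans (min_le_right _ _) ih

lemma foldr_min_le_mem (b : ℝ) : ∀ (l : List ℝ), ∀ x ∈ l, l.foldr min b ≤ x := by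
  intro l
  induction l with
  | nil => simp
  | cons c l ih =>
    intro x hx
    simp only [List.foldr_cons]
    rcases List.mem_cons.mp hx with rfl | hx
    · exact min_le_left _ _
    · exact le_trans (min_le_right _ _) (ih x hx)

lemma cycQ_le_mem (qn : V → ℝ) : ∀ (L : List V), ∀ x ∈ L, cycQ qn L ≤ qn x := by
  intro L x hx
  cases L with
  | nil => simp at hx
  | cons a l =>
    rcases List.mem_cons.mp hx with rfl | hx
    · exact foldr_min_le _ _
    · exact foldr_min_le_mem (qn a) (l.map qn) (qn x) (List.mem_map_of_mem (f := qn) hx)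

lemma foldr_min_cases (b : ℝ) : ∀ (l : List ℝ), l.foldr min b = b ∨ l.foldr min b ∈ l := by
  intro l
  induction l with
  | nil => simp
  | cons c l ih =>
    simp only [List.foldr_cons]
    rcases min_cases c (l.foldr min b) with ⟨h, _⟩ | ⟨h, _⟩
    · exact Or.inr (by rw [h]; exact List.mem_cons_self)
    · rw [h]
      rcases ih with h' | h'
      · exact Or.inl h'
      · exact Or.inr (List.mem_cons_of_mem _ h')

lemma cycQ_mem (qn : V → ℝ) : ∀ (L : List V), L ≠ [] → ∃ x ∈ L, qn x ≤ cycQ qn L := by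
  intro L hL
  cases L with
  | nil => exact absurd rfl hL
  | cons a l =>
    rcases foldr_min_cases (qn a) (l.map qn) with h | h
    · exact ⟨a, List.mem_cons_self, by rw [cycQ, h]⟩
    · obtain ⟨x, hx, hx'⟩ := List.mem_map.mp h
      exact ⟨x, List.mem_cons_of_mem _ hx, by rw [cycQ, hx']⟩

/-- under the triangle inequality, any set covering solution (a finite
collection of length-feasible cycles such that every node lies in at least one cycle)
can be transformed into a set partitioning solution with the same number of cycles:
each cycle is replaced by a subcycle (keeping, for every multiply covered node, only
one occurrence across all cycles) so that the resulting cycles are node-disjoint, cover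
all of `V`, and each is empty or length-feasible. -/
theorem covering_to_partitioning
    (te : V → V → ℝ) (qn : V → ℝ)
    (hte : ∀ i j, 0 ≤ te i j)
    (htri : ∀ i j k, te i j ≤ te i k + te k j)
    (hqn : ∀ i, 0 < qn i)
    (n : ℕ) (C : Fin n → List V)
    (hfeas : ∀ k, LengthFeasible te qn (C k))
    (hcover : ∀ i : V, ∃ k, i ∈ C k) :
    ∃ D : Fin n → List V,
      (∀ k, (D k).toFinset ⊆ (C k).toFinset) ∧
      (∀ k l, k ≠ l → Disjoint (D k).toFinset (D l).toFinset) ∧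
      (∀ i : V, ∃ k, i ∈ D k) ∧
      (∀ k, D k = [] ∨ LengthFeasible te qn (D k)) := by
  classical
  choose f hf using hcover
  refine ⟨fun k => (C k).filter (fun i => f i = k), ?_, ?_, ?_, ?_⟩
  · intro k x hx
    simp only [List.mem_toFinset] at hx ⊢
    exact (List.mem_filter.mp hx).1
  · intro k l hkl
    rw [Finset.disjoint_left]
    intro x hx hx'
    simp only [List.mem_toFinset, List.mem_filter, decide_eq_true_eq] at hx hx'
    exact hkl (hx.2 ▸ hx'.2 ▸ rfl)
  · intro i
    exact ⟨f i, List.mem_filter.mpr ⟨hf i, by simp⟩⟩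
  · intro k
    by_cases h : (C k).filter (fun i => f i = k) = []
    · exact Or.inl h
    · right
      have hsub : ((C k).filter (fun i => f i = k)).Sublist (C k) := List.filter_sublist
      obtain ⟨hne, hnd, hle⟩ := hfeas k
      refine ⟨h, hnd.sublist hsub, ?_⟩
      have h1 : cycTime te ((C k).filter (fun i => f i = k)) ≤ cycTime te (C k) :=
        cycTime_sublist te hte htri hsub h
      have h2 : cycQ qn (C k) ≤ cycQ qn ((C k).filter (fun i => f i = k)) := by
        obtain ⟨x, hx, hx2⟩ := cycQ_mem qn _ h
        exact le_trans (le_trans (cycQ_le_mem qn (C k) x (hsub.subset hx)) hx2) (le_refl _)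
      linarith
end
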